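/- arXiv:1706.03869 — 7 statements merged into one kernel-verified Lean document; each statement's English description precedes it below -/
import Mathlib

section
/- Let k ≥ 1 be an integer, let β₀, β₁, …, β_k be real numbers with sin βⱼ ≠ 0 for all j, and let ℓ₁, …, ℓ_k be positive reals. Let M be the k×k symmetric tridiagonal real matrix with diagonal entries M_{jj} = (cot β_{j−1} + cot βⱼ)/ℓⱼ² for j = 1,…,k and off-diagonal entries M_{j,j+1} = M_{j+1,j} = −csc βⱼ/(ℓⱼ ℓ_{j+1}) for j = 1,…,k−1 (all other entries zero). Then det M = (∏_{j=0}^{k} csc βⱼ) · sin(β₀ + β₁ + ⋯ + β_k) / (∏_{j=1}^{k} ℓⱼ²). -/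
open Finset Matrix

/-- The explicit tridiagonal wheel matrix. -/
noncomputable def triW (β ℓ : ℕ → ℝ) (k : ℕ) : Matrix (Fin k) (Fin k) ℝ := fun i j =>
  if (i : ℕ) = (j : ℕ) then
    (Real.cos (β i) / Real.sin (β i)
      + Real.cos (β ((i : ℕ) + 1)) / Real.sin (β ((i : ℕ) + 1))) / (ℓ ((i : ℕ) + 1)) ^ 2
  else if (j : ℕ) = (i : ℕ) + 1 then
    -(1 / Real.sin (β ((i : ℕ) + 1))) / (ℓ ((i : ℕ) + 1) * ℓ ((i : ℕ) + 2))
  else if (i : ℕ) = (j : ℕ) + 1 then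
    -(1 / Real.sin (β ((j : ℕ) + 1))) / (ℓ ((j : ℕ) + 1) * ℓ ((j : ℕ) + 2))
  else 0

lemma triW_diag (β ℓ : ℕ → ℝ) (k : ℕ) (i j : Fin k) (h : (i : ℕ) = j) :
    triW β ℓ k i j = (Real.cos (β i) / Real.sin (β i)
      + Real.cos (β ((i : ℕ) + 1)) / Real.sin (β ((i : ℕ) + 1))) / (ℓ ((i : ℕ) + 1)) ^ 2 := by
  unfold triW; rw [if_pos h]

lemma triW_off (β ℓ : ℕ → ℝ) (k : ℕ) (i j : Fin k) (h : (j : ℕ) = (i : ℕ) + 1) :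
    triW β ℓ k i j = -(1 / Real.sin (β ((i : ℕ) + 1))) / (ℓ ((i : ℕ) + 1) * ℓ ((i : ℕ) + 2)) := by
  unfold triW; rw [if_neg (by omega), if_pos h]

lemma triW_off' (β ℓ : ℕ → ℝ) (k : ℕ) (i j : Fin k) (h : (i : ℕ) = (j : ℕ) + 1) :
    triW β ℓ k i j = -(1 / Real.sin (β ((j : ℕ) + 1))) / (ℓ ((j : ℕ) + 1) * ℓ ((j : ℕ) + 2)) := by
  unfold triW; rw [if_neg (by omega), if_neg (by omega), if_pos h]

lemma triW_zero (β ℓ : ℕ → ℝ) (k : ℕ) (i j : Fin k)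
    (h1 : (i : ℕ) ≠ j) (h2 : (j : ℕ) ≠ (i : ℕ) + 1) (h3 : (i : ℕ) ≠ (j : ℕ) + 1) :
    triW β ℓ k i j = 0 := by
  unfold triW; rw [if_neg h1, if_neg h2, if_neg h3]

lemma triW_succ_succ (β ℓ : ℕ → ℝ) (m : ℕ) (i j : Fin m) :
    triW β ℓ (m + 1) i.succ j.succ
      = triW (fun n => β (n + 1)) (fun n => ℓ (n + 1)) m i j := by
  unfold triW
  simp only [Fin.val_succ]
  split_ifs <;> first | rfl | omega

lemma triW_det_rec (β ℓ : ℕ → ℝ) (k : ℕ) :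
    (triW β ℓ (k + 2)).det =
      ((Real.cos (β 0) / Real.sin (β 0) + Real.cos (β 1) / Real.sin (β 1)) / (ℓ 1) ^ 2)
          * (triW (fun n => β (n + 1)) (fun n => ℓ (n + 1)) (k + 1)).det
        - (-(1 / Real.sin (β 1)) / (ℓ 1 * ℓ 2)) ^ 2
          * (triW (fun n => β (n + 2)) (fun n => ℓ (n + 2)) k).det := by
  have hcol0 : (Fin.succ (0 : Fin (k + 1))).succAbove (0 : Fin (k + 1)) = 0 := by
    ext; simp [Fin.succAbove, Fin.lt_def]
  have hcolsucc : ∀ j : Fin k, (Fin.succ (0 : Fin (k + 1))).succAbove j.succ = j.succ.succ := by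
    intro j; ext; simp [Fin.succAbove, Fin.lt_def]
  rw [Matrix.det_succ_row_zero]
  rw [Fin.sum_univ_succ, Fin.sum_univ_succ]
  have htail : ∀ i : Fin k, triW β ℓ (k + 2) 0 i.succ.succ = 0 := by
    intro i
    exact triW_zero _ _ _ _ _ (by simp) (by simp) (by simp)
  have hminor00 : ((triW β ℓ (k + 2)).submatrix Fin.succ (Fin.succAbove 0)).det
      = (triW (fun n => β (n + 1)) (fun n => ℓ (n + 1)) (k + 1)).det := by
    congr 1
    ext i j
    rw [Matrix.submatrix_apply, Fin.succAbove_zero, ← triW_succ_succ]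
  have h00 : triW β ℓ (k + 2) 0 0
      = (Real.cos (β 0) / Real.sin (β 0) + Real.cos (β 1) / Real.sin (β 1)) / (ℓ 1) ^ 2 :=
    triW_diag _ _ _ _ _ rfl
  have h01 : triW β ℓ (k + 2) 0 (Fin.succ 0) = -(1 / Real.sin (β 1)) / (ℓ 1 * ℓ 2) :=
    triW_off _ _ _ _ _ (by simp)
  have hB : ((triW β ℓ (k + 2)).submatrix Fin.succ (Fin.succ 0).succAbove).det
      = (-(1 / Real.sin (β 1)) / (ℓ 1 * ℓ 2))
        * (triW (fun n => β (n + 2)) (fun n => ℓ (n + 2)) k).det := by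
    rw [Matrix.det_succ_column_zero, Fin.sum_univ_succ]
    have e1 : ∀ i : Fin k,
        ((triW β ℓ (k + 2)).submatrix Fin.succ (Fin.succ 0).succAbove) i.succ 0 = 0 := by
      intro i
      rw [Matrix.submatrix_apply, hcol0]
      exact triW_zero _ _ _ _ _ (by simp) (by simp) (by simp)
    have e0 : ((triW β ℓ (k + 2)).submatrix Fin.succ (Fin.succ 0).succAbove) 0 0
        = -(1 / Real.sin (β 1)) / (ℓ 1 * ℓ 2) := by
      rw [Matrix.submatrix_apply, hcol0]
      exact triW_off' _ _ _ _ _ (by simp)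
    have e2 : (((triW β ℓ (k + 2)).submatrix Fin.succ (Fin.succ 0).succAbove).submatrix
          (Fin.succAbove 0) Fin.succ).det
        = (triW (fun n => β (n + 2)) (fun n => ℓ (n + 2)) k).det := by
      congr 1
      ext i j
      rw [Matrix.submatrix_apply, Fin.succAbove_zero, Matrix.submatrix_apply, hcolsucc]
      rw [triW_succ_succ, triW_succ_succ]
    simp only [e1, mul_zero, zero_mul, Finset.sum_const_zero, add_zero]
    rw [e0, e2]
    simp
  simp only [htail, mul_zero, zero_mul, Finset.sum_const_zero, add_zero]
  rw [hminor00, h00, h01, hB]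
  simp [pow_two]
  ring

lemma triW_det_formula : ∀ (k : ℕ) (β ℓ : ℕ → ℝ),
    (∀ j ≤ k, Real.sin (β j) ≠ 0) → (∀ j, 1 ≤ j → j ≤ k → ℓ j ≠ 0) →
    (triW β ℓ k).det = ((∏ j ∈ range (k + 1), (1 / Real.sin (β j)))
        * Real.sin (∑ j ∈ range (k + 1), β j)) / ∏ j ∈ range k, (ℓ (j + 1)) ^ 2 := by
  intro k
  induction k using Nat.strong_induction_on with
  | _ k ih =>
    match k with
    | 0 =>
      intro β ℓ hβ hℓ
      have h0 := hβ 0 le_rfl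
      rw [Matrix.det_isEmpty]
      simp only [zero_add, Finset.prod_range_one, Finset.sum_range_one, Finset.range_zero,
        Finset.prod_empty, div_one]
      field_simp
    | 1 =>
      intro β ℓ hβ hℓ
      have h0 := hβ 0 (by omega)
      have h1 := hβ 1 le_rfl
      have hl1 := hℓ 1 le_rfl le_rfl
      rw [Matrix.det_fin_one, triW_diag β ℓ 1 0 0 rfl]
      simp only [Fin.val_zero, Finset.prod_range_succ, Finset.sum_range_succ,
        Finset.prod_range_one, Finset.sum_range_one, Real.sin_add, zero_add]
      field_simp
      simp only [Finset.sum_range_zero, Finset.prod_range_zero, Real.sin_zero, Real.cos_zero]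
      ring
    | (k + 2) =>
      intro β ℓ hβ hℓ
      have ih1 := ih (k + 1) (by omega) (fun n => β (n + 1)) (fun n => ℓ (n + 1))
        (fun j hj => hβ (j + 1) (by omega)) (fun j h1 h2 => hℓ (j + 1) (by omega) (by omega))
      have ih2 := ih k (by omega) (fun n => β (n + 2)) (fun n => ℓ (n + 2))
        (fun j hj => hβ (j + 2) (by omega)) (fun j h1 h2 => hℓ (j + 2) (by omega) (by omega))
      have hs0 := hβ 0 (by omega)
      have hs1 := hβ 1 (by omega)
      have hs2 := hβ 2 (by omega)
      have hl1 := hℓ 1 (by omega) (by omega)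
      have hl2 := hℓ 2 (by omega) (by omega)
      have hL : (∏ j ∈ Finset.range k, ℓ (j + 3) ^ 2) ≠ 0 := by
        rw [Finset.prod_ne_zero_iff]
        intro j hj
        exact pow_ne_zero _ (hℓ (j + 3) (by omega) (by simp only [Finset.mem_range] at hj; omega))
      have e1 : (∏ j ∈ Finset.range (k + 1 + 1), 1 / Real.sin ((fun n => β (n + 1)) j))
          = (∏ j ∈ Finset.range k, 1 / Real.sin (β (j + 3)))
            * (1 / Real.sin (β 2)) * (1 / Real.sin (β 1)) := by
        rw [Finset.prod_range_succ', Finset.prod_range_succ']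
      have e2 : (∑ j ∈ Finset.range (k + 1 + 1), (fun n => β (n + 1)) j)
          = (∑ j ∈ Finset.range k, β (j + 3)) + β 2 + β 1 := by
        rw [Finset.sum_range_succ', Finset.sum_range_succ']
      have e3 : (∏ j ∈ Finset.range (k + 1), (fun n => ℓ (n + 1)) (j + 1) ^ 2)
          = (∏ j ∈ Finset.range k, ℓ (j + 3) ^ 2) * ℓ 2 ^ 2 := by
        rw [Finset.prod_range_succ']
      have e4 : (∏ j ∈ Finset.range (k + 1), 1 / Real.sin ((fun n => β (n + 2)) j))
          = (∏ j ∈ Finset.range k, 1 / Real.sin (β (j + 3))) * (1 / Real.sin (β 2)) := by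
        rw [Finset.prod_range_succ']
      have e5 : (∑ j ∈ Finset.range (k + 1), (fun n => β (n + 2)) j)
          = (∑ j ∈ Finset.range k, β (j + 3)) + β 2 := by
        rw [Finset.sum_range_succ']
      have e6 : (∏ j ∈ Finset.range k, (fun n => ℓ (n + 2)) (j + 1) ^ 2)
          = ∏ j ∈ Finset.range k, ℓ (j + 3) ^ 2 := rfl
      have e7 : (∏ j ∈ Finset.range (k + 2 + 1), 1 / Real.sin (β j))
          = (∏ j ∈ Finset.range k, 1 / Real.sin (β (j + 3)))
            * (1 / Real.sin (β 2)) * (1 / Real.sin (β 1)) * (1 / Real.sin (β 0)) := by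
        rw [Finset.prod_range_succ', Finset.prod_range_succ', Finset.prod_range_succ']
      have e8 : (∑ j ∈ Finset.range (k + 2 + 1), β j)
          = (∑ j ∈ Finset.range k, β (j + 3)) + β 2 + β 1 + β 0 := by
        rw [Finset.sum_range_succ', Finset.sum_range_succ', Finset.sum_range_succ']
      have e9 : (∏ j ∈ Finset.range (k + 2), ℓ (j + 1) ^ 2)
          = (∏ j ∈ Finset.range k, ℓ (j + 3) ^ 2) * ℓ 2 ^ 2 * ℓ 1 ^ 2 := by
        rw [Finset.prod_range_succ', Finset.prod_range_succ']
      rw [triW_det_rec, ih1, ih2, e1, e2, e3, e4, e5, e6, e7, e8, e9]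
      set A := ∏ j ∈ Finset.range k, 1 / Real.sin (β (j + 3)) with hA
      set S := ∑ j ∈ Finset.range k, β (j + 3) with hS
      set L := ∏ j ∈ Finset.range k, ℓ (j + 3) ^ 2 with hL2
      simp only [Real.sin_add, Real.cos_add]
      field_simp
      linear_combination (A * Real.sin (β 0)
          * (Real.sin S * Real.cos (β 2) + Real.cos S * Real.sin (β 2)))
        * Real.sin_sq_add_cos_sq (β 1)


open Finset in
/-- Determinant of the reduced tridiagonal quadratic-form matrix of a flat origami vertex
(Eq. (determinant) of the paper).  Here the `k × k` matrix `M` is indexed by `i : Fin k`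
representing the paper index `j = i + 1 ∈ {1, …, k}`; its diagonal entries are
`(cot β_{j-1} + cot β_j) / ℓ_j ^ 2`, its entries adjacent to the diagonal are
`- csc β_j / (ℓ_j * ℓ_{j+1})`, it is symmetric, and all other entries vanish.  Then
`det M = (∏_{j=0}^{k} csc β_j) * sin (β₀ + ⋯ + β_k) / ∏_{j=1}^{k} ℓ_j ^ 2`,
where `csc x = 1 / sin x` and `cot x = cos x / sin x`. -/
theorem det_tridiagonal_wheel (k : ℕ) (hk : 1 ≤ k) (β ℓ : ℕ → ℝ)
    (hβ : ∀ j ≤ k, Real.sin (β j) ≠ 0)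
    (hℓ : ∀ j, 1 ≤ j → j ≤ k → 0 < ℓ j)
    (M : Matrix (Fin k) (Fin k) ℝ)
    (hdiag : ∀ i : Fin k,
      M i i = (Real.cos (β i) / Real.sin (β i)
        + Real.cos (β ((i : ℕ) + 1)) / Real.sin (β ((i : ℕ) + 1))) / (ℓ ((i : ℕ) + 1)) ^ 2)
    (hoff : ∀ i j : Fin k, (j : ℕ) = (i : ℕ) + 1 →
      M i j = -(1 / Real.sin (β ((i : ℕ) + 1))) / (ℓ ((i : ℕ) + 1) * ℓ ((i : ℕ) + 2)))
    (hsymm : ∀ i j : Fin k, M i j = M j i)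
    (hzero : ∀ i j : Fin k, (i : ℕ) + 1 < (j : ℕ) → M i j = 0) :
    M.det = ((∏ j ∈ range (k + 1), (1 / Real.sin (β j)))
        * Real.sin (∑ j ∈ range (k + 1), β j)) / ∏ j ∈ range k, (ℓ (j + 1)) ^ 2 := by
  have hM : M = triW β ℓ k := by
    ext i j
    by_cases h0 : (i : ℕ) = j
    · have : i = j := Fin.ext h0
      subst this
      rw [hdiag, triW_diag _ _ _ _ _ rfl]
    · by_cases h1 : (j : ℕ) = (i : ℕ) + 1
      · rw [hoff i j h1, triW_off _ _ _ _ _ h1]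
      · by_cases h2 : (i : ℕ) = (j : ℕ) + 1
        · rw [hsymm, hoff j i h2, triW_off' _ _ _ _ _ h2]
        · rw [triW_zero _ _ _ _ _ h0 h1 h2]
          rcases Nat.lt_or_ge (i : ℕ) (j : ℕ) with h | h
          · exact hzero i j (by omega)
          · rw [hsymm]; exact hzero j i (by omega)
  rw [hM]
  exact triW_det_formula k β ℓ hβ (fun j h1 h2 => (hℓ j h1 h2).ne')
end

section
/- Let N ≥ 4 be an integer and L > 0 a real number. For m = 1, …, N−2 define λ_m = (2 csc(2π/N)/L²) · (cos(2π/N) − cos(mπ/(N−1))). Then λ₁ < 0 and λ_m > 0 for all m with 2 ≤ m ≤ N−2. Moreover, each λ_m is an eigenvalue of the (N−2)×(N−2) symmetric tridiagonal matrix with all diagonal entries equal to 2cot(2π/N)/L² and all entries adjacent to the diagonal equal to −csc(2π/N)/L². -/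
/-- The reduced quadratic-form matrix of an unfolded `N`-fold origami vertex with all sector
angles equal to `2π/N` and all fold lengths equal to `L` is the `(N-2) × (N-2)` symmetric
tridiagonal matrix with diagonal entries `2 cot (2π/N) / L²` and entries adjacent to the
diagonal equal to `- csc (2π/N) / L²`.  Its eigenvalues are the numbers
`λ_m = (2 csc (2π/N) / L²) (cos (2π/N) - cos (m π/(N-1)))`, `m = 1, …, N-2`; moreover
`λ₁ < 0` and `λ_m > 0` for `2 ≤ m ≤ N-2`. -/
theorem equal_angle_vertex_eigenvalues (N : ℕ) (hN : 4 ≤ N) (L : ℝ) (hL : 0 < L)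
    (lam : ℕ → ℝ)
    (hlam : ∀ m : ℕ, lam m = (2 * (1 / Real.sin (2 * Real.pi / N)) / L ^ 2)
      * (Real.cos (2 * Real.pi / N) - Real.cos (m * Real.pi / ((N : ℝ) - 1))))
    (M : Matrix (Fin (N - 2)) (Fin (N - 2)) ℝ)
    (hM : ∀ i j : Fin (N - 2), M i j =
      if i = j then 2 * (Real.cos (2 * Real.pi / N) / Real.sin (2 * Real.pi / N)) / L ^ 2
      else if (i : ℕ) + 1 = (j : ℕ) ∨ (j : ℕ) + 1 = (i : ℕ) then
        -(1 / Real.sin (2 * Real.pi / N)) / L ^ 2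
      else 0) :
    lam 1 < 0 ∧ (∀ m : ℕ, 2 ≤ m → m ≤ N - 2 → 0 < lam m) ∧
    ∀ m : ℕ, 1 ≤ m → m ≤ N - 2 → Module.End.HasEigenvalue M.mulVecLin (lam m) := by
  have hπ := Real.pi_pos
  have hN4 : (4 : ℝ) ≤ (N : ℝ) := by exact_mod_cast hN
  have hNpos : (0 : ℝ) < (N : ℝ) := by linarith
  have hN1 : (0 : ℝ) < (N : ℝ) - 1 := by linarith
  set s := Real.sin (2 * Real.pi / N) with hs_def
  set c := Real.cos (2 * Real.pi / N) with hc_def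
  have hang_pos : 0 < 2 * Real.pi / N := by positivity
  have hang_lt : 2 * Real.pi / N < Real.pi := by
    rw [div_lt_iff₀ hNpos]; nlinarith
  have hs : 0 < s := Real.sin_pos_of_pos_of_lt_pi hang_pos hang_lt
  have hK : 0 < 2 * (1 / s) / L ^ 2 := by positivity
  refine ⟨?_, ?_, ?_⟩
  · rw [hlam]
    apply mul_neg_of_pos_of_neg hK
    have h1 : c < Real.cos ((1 : ℕ) * Real.pi / ((N : ℝ) - 1)) := by
      rw [hc_def]
      apply Real.cos_lt_cos_of_nonneg_of_le_pi
      · positivity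
      · linarith
      · push_cast
        rw [div_lt_div_iff₀ hN1 hNpos]; nlinarith
    linarith
  · intro m hm2 hmN
    have hmR : (2 : ℝ) ≤ (m : ℝ) := by exact_mod_cast hm2
    have hmN' : (m : ℝ) ≤ (N : ℝ) - 2 := by
      have h : m + 2 ≤ N := by omega
      have := (Nat.cast_le (α := ℝ)).2 h
      push_cast at this; linarith
    rw [hlam]
    apply mul_pos hK
    have h1 : Real.cos ((m : ℝ) * Real.pi / ((N : ℝ) - 1)) < c := by
      rw [hc_def]
      apply Real.cos_lt_cos_of_nonneg_of_le_pi
      · positivity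
      · rw [div_le_iff₀ hN1]
        nlinarith [mul_nonneg (mul_nonneg (show (0:ℝ) ≤ (N:ℝ) - 1 - (m:ℝ) by linarith) hπ.le) hNpos.le]
      · rw [div_lt_div_iff₀ hNpos hN1]
        nlinarith [mul_nonneg (mul_nonneg (show (0:ℝ) ≤ (m:ℝ) - 2 by linarith) hπ.le) hNpos.le]
    linarith
  · intro m hm1 hmN
    have hn2 : 2 ≤ N - 2 := by omega
    have hmR : (1 : ℝ) ≤ (m : ℝ) := by exact_mod_cast hm1
    have hmN' : (m : ℝ) ≤ (N : ℝ) - 2 := by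
      have h : m + 2 ≤ N := by omega
      have := (Nat.cast_le (α := ℝ)).2 h
      push_cast at this; linarith
    have hcast : ((N - 2 : ℕ) : ℝ) = (N : ℝ) - 2 := by
      rw [Nat.cast_sub (by omega)]; norm_num
    set θ := (m : ℝ) * Real.pi / ((N : ℝ) - 1) with hθ_def
    have hθpos : 0 < θ := by positivity
    have hθlt : θ < Real.pi := by
      rw [hθ_def, div_lt_iff₀ hN1]
      nlinarith [mul_nonneg (mul_nonneg (show (0:ℝ) ≤ (N:ℝ) - 1 - (m:ℝ) by linarith) hπ.le) (le_of_lt hπ)]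
    set a := 2 * (c / s) / L ^ 2 with ha_def
    set b := -(1 / s) / L ^ 2 with hb_def
    set v : Fin (N - 2) → ℝ := fun j => Real.sin (((j : ℕ) + 1 : ℝ) * θ) with hv_def
    have hbound : Real.sin ((((N - 2 : ℕ) : ℝ) + 1) * θ) = 0 := by
      have h : (((N - 2 : ℕ) : ℝ) + 1) * θ = (m : ℝ) * Real.pi := by
        rw [hcast, hθ_def]; field_simp; ring
      rw [h]
      exact Real.sin_nat_mul_pi m
    have hv0 : v ≠ 0 := by
      intro h
      have h0 : v ⟨0, by omega⟩ = 0 := by rw [h]; rfl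
      have hsθ : Real.sin θ > 0 := Real.sin_pos_of_pos_of_lt_pi hθpos hθlt
      rw [hv_def] at h0
      simp only [Fin.val_mk, Nat.cast_zero, zero_add, one_mul] at h0
      linarith
    have heq : M.mulVecLin v = lam m • v := by
      funext j
      rw [Matrix.mulVecLin_apply]
      show (M.mulVec v) j = lam m * v j
      rw [Matrix.mulVec, dotProduct]
      have hsplit : ∀ k : Fin (N - 2), M j k * v k =
          (if k = j then a * v k else 0) +
          (if (k : ℕ) = (j : ℕ) + 1 then b * v k else 0) +
          (if (k : ℕ) + 1 = (j : ℕ) then b * v k else 0) := by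
        intro k
        rw [hM j k]
        rcases eq_or_ne j k with h1 | h1
        · subst h1
          rw [if_pos rfl, if_pos rfl, if_neg (by omega), if_neg (by omega)]
          ring
        · have h1' : (j : ℕ) ≠ (k : ℕ) := fun h => h1 (Fin.ext h)
          rw [if_neg h1]
          rcases eq_or_ne ((k : ℕ)) ((j : ℕ) + 1) with h2 | h2
          · rw [if_pos (Or.inl h2.symm), if_neg (fun h => h1 h.symm), if_pos h2,
              if_neg (by omega)]
            ring
          · rcases eq_or_ne ((k : ℕ) + 1) ((j : ℕ)) with h3 | h3
            · rw [if_pos (Or.inr h3), if_neg (fun h => h1 h.symm), if_neg h2, if_pos h3]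
              ring
            · rw [if_neg (show ¬((j : ℕ) + 1 = (k : ℕ) ∨ (k : ℕ) + 1 = (j : ℕ)) by omega),
                if_neg (fun h => h1 h.symm), if_neg h2, if_neg h3]
              ring
      rw [Finset.sum_congr rfl (fun k _ => hsplit k)]
      rw [Finset.sum_add_distrib, Finset.sum_add_distrib]
      have S1 : (∑ k : Fin (N - 2), if k = j then a * v k else 0) = a * v j := by
        rw [Finset.sum_ite_eq' Finset.univ j (fun k => a * v k), if_pos (Finset.mem_univ j)]
      have S2 : (∑ k : Fin (N - 2), if (k : ℕ) = (j : ℕ) + 1 then b * v k else 0)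
          = b * Real.sin (((j : ℕ) + 2 : ℝ) * θ) := by
        by_cases hj : (j : ℕ) + 1 < N - 2
        · rw [Finset.sum_eq_single (⟨(j : ℕ) + 1, hj⟩ : Fin (N - 2))]
          · rw [if_pos rfl]
            show b * Real.sin _ = _
            congr 1
            simp only [Fin.val_mk]
            push_cast; ring
          · intro k _ hk
            exact if_neg (fun h => hk (Fin.ext h))
          · intro h; exact absurd (Finset.mem_univ _) h
        · have hj' : (j : ℕ) = N - 2 - 1 := by have := j.isLt; omega
          rw [Finset.sum_eq_zero]
          · have h2 : ((j : ℕ) + 2 : ℝ) = ((N - 2 : ℕ) : ℝ) + 1 := by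
              have hc : ((j : ℕ) : ℝ) = ((N - 2 - 1 : ℕ) : ℝ) := by rw [hj']
              rw [hc, Nat.cast_sub (show 1 ≤ N - 2 by omega)]
              push_cast [Nat.cast_sub (show 2 ≤ N by omega)]
              ring
            rw [h2, hbound, mul_zero]
          · intro k _
            exact if_neg (by have := k.isLt; omega)
      have S3 : (∑ k : Fin (N - 2), if (k : ℕ) + 1 = (j : ℕ) then b * v k else 0)
          = b * Real.sin ((j : ℕ) * θ) := by
        by_cases hj : 0 < (j : ℕ)
        · rw [Finset.sum_eq_single (⟨(j : ℕ) - 1, by have := j.isLt; omega⟩ : Fin (N - 2))]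
          · rw [if_pos (show ((⟨(j : ℕ) - 1, by have := j.isLt; omega⟩ : Fin (N - 2)) : ℕ) + 1 = (j : ℕ) by
              simp only [Fin.val_mk]; omega), hv_def]
            have : ((((j : ℕ) - 1 : ℕ) : ℝ) + 1) = ((j : ℕ) : ℝ) := by
              rw [Nat.cast_sub (by omega)]; push_cast; ring
            simp only [Fin.val_mk]
            rw [this]
          · intro k _ hk
            exact if_neg (fun h => hk (Fin.ext (by simp only [Fin.val_mk]; omega)))
          · intro h; exact absurd (Finset.mem_univ _) h
        · have hj' : (j : ℕ) = 0 := by omega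
          rw [Finset.sum_eq_zero, hj']
          · norm_num
          · intro k _
            exact if_neg (by omega)
      rw [S1, S2, S3, hlam m]
      have hcosθ : Real.cos ((m : ℝ) * Real.pi / ((N : ℝ) - 1)) = Real.cos θ := by rw [hθ_def]
      rw [hcosθ]
      have key : Real.sin (((j : ℕ) + 2 : ℝ) * θ) + Real.sin (((j : ℕ) : ℝ) * θ)
          = 2 * Real.sin (((j : ℕ) + 1 : ℝ) * θ) * Real.cos θ := by
        have e1 : ((j : ℕ) + 2 : ℝ) * θ = ((j : ℕ) + 1 : ℝ) * θ + θ := by ring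
        have e2 : ((j : ℕ) : ℝ) * θ = ((j : ℕ) + 1 : ℝ) * θ - θ := by ring
        rw [e1, e2, Real.sin_add, Real.sin_sub]; ring
      have hvj : v j = Real.sin (((j : ℕ) + 1 : ℝ) * θ) := rfl
      rw [hvj]
      linear_combination b * key
    exact Module.End.hasEigenvalue_of_hasEigenvector
      ⟨Module.End.mem_eigenspace_iff.mpr heq, hv0⟩
end

section
/- Let N ≥ 3 be an integer, let α₁, …, α_N be real numbers with sin α_n ≠ 0 for all n and α₁ + ⋯ + α_N = 2π, and let L₁, …, L_N be positive reals (indices mod N). Set θ_n = α₁ + ⋯ + α_{n−1}, u_n = (cos θ_n, sin θ_n) ∈ ℝ², and define the spoke stresses σ_n = csc α_n / L_{n+1} + csc α_{n−1} / L_{n−1} − (cot α_n + cot α_{n−1}) / L_n. Then Σ_{n=1}^{N} σ_n u_n = 0. -/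
open Finset in
/-- Force balance at the hub vertex of the wheel self stress of an unfolded origami vertex:
with sector angles `α n` (cyclic mod `N`, summing to `2π`), spoke lengths `L n > 0`,
spoke directions `u n = (cos θ n, sin θ n)` where `θ n = α 1 + ⋯ + α (n-1)`, and spoke
stresses `σ n = csc α_n / L_{n+1} + csc α_{n-1} / L_{n-1} - (cot α_n + cot α_{n-1}) / L_n`,
one has `∑_{n=1}^{N} σ n • u n = 0`. -/
theorem hub_force_balance (N : ℕ) (hN : 3 ≤ N) (α L : ℕ → ℝ)
    (hαper : ∀ n, α (n + N) = α n) (hLper : ∀ n, L (n + N) = L n)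
    (hα : ∀ n, 1 ≤ n → n ≤ N → Real.sin (α n) ≠ 0)
    (hsum : ∑ n ∈ Icc 1 N, α n = 2 * Real.pi)
    (hL : ∀ n, 1 ≤ n → n ≤ N → 0 < L n)
    (θ : ℕ → ℝ) (hθ : ∀ n, θ n = ∑ i ∈ Ico 1 n, α i)
    (u : ℕ → ℝ × ℝ) (hu : ∀ n, u n = (Real.cos (θ n), Real.sin (θ n)))
    (σ : ℕ → ℝ)
    (hσ : ∀ n, σ n = (1 / Real.sin (α n)) / L (n + 1)
      + (1 / Real.sin (α (n - 1))) / L (n - 1)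
      - (Real.cos (α n) / Real.sin (α n) + Real.cos (α (n - 1)) / Real.sin (α (n - 1))) / L n) :
    ∑ n ∈ Icc 1 N, σ n • u n = 0 := by
  have hθ1 : θ 1 = 0 := by simp [hθ]
  have hθs : ∀ k, 1 ≤ k → θ (k + 1) = θ k + α k := by
    intro k hk
    rw [hθ, hθ, Finset.sum_Ico_succ_top hk]
  have hθN : θ (N + 1) = 2 * Real.pi := by
    rw [hθ, Finset.Ico_add_one_right_eq_Icc, hsum]
  set p : ℕ → ℝ × ℝ := fun k => (-Real.sin (θ k), Real.cos (θ k)) with hp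
  set F : ℕ → ℝ × ℝ := fun k =>
    (1 / Real.sin (α k) / L k - (Real.cos (α k) / Real.sin (α k)) / L (k + 1)) • u (k + 1)
    with hF
  set G : ℕ → ℝ × ℝ := fun k =>
    (1 / Real.sin (α k) / L (k + 1) - (Real.cos (α k) / Real.sin (α k)) / L k) • u k with hG
  set g : ℕ → ℝ × ℝ := fun k => (L k)⁻¹ • p k with hg
  -- key pointwise identity for each edge
  have key : ∀ k, 1 ≤ k → k ≤ N → G k + F k = g k - g (k + 1) := by
    intro k h1 h2
    have hs := hα k h1 h2
    have ht := hθs k h1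
    have hpy := Real.sin_sq_add_cos_sq (α k)
    have hs2 : Real.sin (α k) * (Real.sin (α k))⁻¹ = 1 := mul_inv_cancel₀ hs
    simp only [hG, hF, hg, hp, hu, ht, Prod.smul_mk, Prod.mk_add_mk, Prod.mk_sub_mk,
      Prod.mk.injEq, Real.cos_add, Real.sin_add, smul_eq_mul]
    constructor
    · linear_combination (-Real.cos (θ k) / (Real.sin (α k) * L (k + 1))) * hpy +
        (Real.cos (α k) * Real.sin (θ k) / L (k + 1) - Real.sin (θ k) / L k +
          Real.sin (α k) * Real.cos (θ k) / L (k + 1)) * hs2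
    · linear_combination (-Real.sin (θ k) / (Real.sin (α k) * L (k + 1))) * hpy +
        (-(Real.cos (α k) * Real.cos (θ k)) / L (k + 1) + Real.cos (θ k) / L k +
          Real.sin (α k) * Real.sin (θ k) / L (k + 1)) * hs2
  -- decomposition of each summand
  have hdecomp : ∀ n, 1 ≤ n → σ n • u n = G n + F (n - 1) := by
    intro n h1
    obtain ⟨m, rfl⟩ : ∃ m, n = m + 1 := ⟨n - 1, (Nat.succ_pred_eq_of_pos h1).symm⟩
    simp only [Nat.add_sub_cancel, hG, hF]
    rw [← add_smul]
    congr 1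
    rw [hσ]
    simp only [Nat.add_sub_cancel]
    ring
  have hLN1 : L (N + 1) = L 1 := by rw [Nat.add_comm]; exact hLper 1
  have hαN : α 0 = α N := by have := hαper 0; rw [Nat.zero_add] at this; exact this.symm
  have hLN : L 0 = L N := by have := hLper 0; rw [Nat.zero_add] at this; exact this.symm
  have huN1 : u (N + 1) = u 1 := by
    rw [hu, hu, hθN, hθ1, Real.cos_two_pi, Real.sin_two_pi, Real.cos_zero, Real.sin_zero]
  have hpN1 : p (N + 1) = p 1 := by
    simp only [hp, hθN, hθ1, Real.cos_two_pi, Real.sin_two_pi, Real.cos_zero, Real.sin_zero]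
  have hF0 : F 0 = F N := by
    simp only [hF, hαN, hLN, hLN1, Nat.zero_add, huN1]
  calc ∑ n ∈ Icc 1 N, σ n • u n
      = ∑ n ∈ Icc 1 N, (G n + F (n - 1)) :=
        Finset.sum_congr rfl fun n hn => hdecomp n (Finset.mem_Icc.mp hn).1
    _ = ∑ n ∈ Icc 1 N, (G n + F n) + (∑ n ∈ Icc 1 N, F (n - 1) - ∑ n ∈ Icc 1 N, F n) := by
        rw [Finset.sum_add_distrib, Finset.sum_add_distrib]; abel
    _ = (g 1 - g (N + 1)) + (F 0 - F N) := by
        congr 1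
        · rw [Finset.sum_congr rfl fun n hn => key n (Finset.mem_Icc.mp hn).1
            (Finset.mem_Icc.mp hn).2]
          rw [← Finset.Ico_add_one_right_eq_Icc, Finset.sum_Ico_eq_sum_range]
          have h := Finset.sum_range_sub' (fun i => g (1 + i)) N
          rw [Nat.add_comm 1 N] at h
          exact h
        · rw [← Finset.Ico_add_one_right_eq_Icc, Finset.sum_Ico_eq_sum_range,
            Finset.sum_Ico_eq_sum_range, ← Finset.sum_sub_distrib]
          simp only [Nat.add_sub_cancel, Nat.add_sub_cancel_left, Nat.add_comm 1]
          exact Finset.sum_range_sub' F N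
    _ = 0 := by simp only [hg]; rw [hLN1, hpN1, hF0]; simp
end

section
/- Let N ≥ 3 be an integer, let α₁, …, α_N be real numbers with sin α_n ≠ 0 for all n and α₁ + ⋯ + α_N = 2π, and let L₁, …, L_N be positive reals (indices mod N). Set θ_n = α₁ + ⋯ + α_{n−1}, U₀ = (0,0) ∈ ℝ², and U_n = L_n(cos θ_n, sin θ_n). Define spoke stresses σ_n = csc α_n / L_{n+1} + csc α_{n−1} / L_{n−1} − (cot α_n + cot α_{n−1}) / L_n. Then for every n ∈ {1, …, N}: σ_n (U_n − U₀)/L_n − (csc α_{n−1}/(L_{n−1} L_n)) (U_n − U_{n−1}) − (csc α_n/(L_n L_{n+1})) (U_n − U_{n+1}) = 0. -/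
set_option maxHeartbeats 1000000

open Finset in
private lemma key (a b t La Lb Ln s : ℝ) (ha : Real.sin a ≠ 0) (hb : Real.sin b ≠ 0)
    (hLa : La ≠ 0) (hLb : Lb ≠ 0) (hLn : Ln ≠ 0)
    (hs : s = 1 / Real.sin a / La + 1 / Real.sin b / Lb
      - (Real.cos a / Real.sin a + Real.cos b / Real.sin b) / Ln)
    (ca sa cb sb : ℝ) (hca : ca = Real.cos (t + a)) (hsa : sa = Real.sin (t + a))
    (hcb : cb = Real.cos (t - b)) (hsb : sb = Real.sin (t - b)) :
    (s / Ln) • ((Ln • ((Real.cos t, Real.sin t) : ℝ × ℝ)) - 0)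
      - ((1 / Real.sin b) / (Lb * Ln)) • (Ln • ((Real.cos t, Real.sin t) : ℝ × ℝ) - Lb • ((cb, sb) : ℝ × ℝ))
      - ((1 / Real.sin a) / (Ln * La)) • (Ln • ((Real.cos t, Real.sin t) : ℝ × ℝ) - La • ((ca, sa) : ℝ × ℝ)) = 0 := by
  subst hs hca hsa hcb hsb
  rw [Real.cos_add, Real.sin_add, Real.cos_sub, Real.sin_sub]
  rw [Prod.ext_iff]
  constructor <;>
  · simp only [Prod.smul_mk, Prod.mk_sub_mk, smul_eq_mul, Prod.fst_sub, Prod.snd_sub,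
      Prod.fst_zero, Prod.snd_zero, sub_zero, Prod.smul_fst, Prod.smul_snd]
    field_simp
    ring


open Finset in
/-- Force balance at each spoke vertex of the wheel self stress of an unfolded origami vertex:
with the hub at `U 0 = 0`, spoke vertices `U n = L n • (cos θ n, sin θ n)`, sector angles
`α n` (cyclic mod `N`, summing to `2π`), spoke lengths `L n > 0` and spoke stresses
`σ n = csc α_n / L_{n+1} + csc α_{n-1} / L_{n-1} - (cot α_n + cot α_{n-1}) / L_n`, one has,
for every `n ∈ {1, …, N}` (spoke neighbour indices taken cyclically in `{1, …, N}`),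
`σ_n (U_n - U_0)/L_n - (csc α_{n-1}/(L_{n-1} L_n)) (U_n - U_{n-1})
  - (csc α_n/(L_n L_{n+1})) (U_n - U_{n+1}) = 0`. -/
theorem spoke_force_balance (N : ℕ) (hN : 3 ≤ N) (α L : ℕ → ℝ)
    (hαper : ∀ n, α (n + N) = α n) (hLper : ∀ n, L (n + N) = L n)
    (hα : ∀ n, 1 ≤ n → n ≤ N → Real.sin (α n) ≠ 0)
    (hsum : ∑ n ∈ Icc 1 N, α n = 2 * Real.pi)
    (hL : ∀ n, 1 ≤ n → n ≤ N → 0 < L n)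
    (θ : ℕ → ℝ) (hθ : ∀ n, θ n = ∑ i ∈ Ico 1 n, α i)
    (U : ℕ → ℝ × ℝ) (hU0 : U 0 = 0)
    (hU : ∀ n, 1 ≤ n → n ≤ N → U n = L n • (Real.cos (θ n), Real.sin (θ n)))
    (σ : ℕ → ℝ)
    (hσ : ∀ n, σ n = (1 / Real.sin (α n)) / L (n + 1)
      + (1 / Real.sin (α (n - 1))) / L (n - 1)
      - (Real.cos (α n) / Real.sin (α n) + Real.cos (α (n - 1)) / Real.sin (α (n - 1))) / L n) :
    ∀ n, 1 ≤ n → n ≤ N →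
      (σ n / L n) • (U n - U 0)
        - ((1 / Real.sin (α (n - 1))) / (L (n - 1) * L n))
            • (U n - U (if n = 1 then N else n - 1))
        - ((1 / Real.sin (α n)) / (L n * L (n + 1)))
            • (U n - U (if n = N then 1 else n + 1)) = 0 := by
  have hθstep : ∀ k, 1 ≤ k → θ (k + 1) = θ k + α k := by
    intro k hk
    rw [hθ, hθ, Finset.sum_Ico_succ_top hk]
  have hθ1 : θ 1 = 0 := by rw [hθ]; simp
  have h2π : θ N + α N = 2 * Real.pi := by
    have h1 : θ (N + 1) = 2 * Real.pi := by
      rw [hθ, Finset.Ico_add_one_right_eq_Icc, hsum]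
    have h2 := hθstep N (by omega)
    linarith
  intro n h1 hn
  rw [hU0]
  by_cases he1 : n = 1
  · subst he1
    rw [if_pos rfl, if_neg (by omega)]
    have hα0 : α 0 = α N := by simpa using (hαper 0).symm
    have hL0 : L 0 = L N := by simpa using (hLper 0).symm
    have hb : Real.sin (α 0) ≠ 0 := by rw [hα0]; exact hα N (by omega) le_rfl
    have hLb : L 0 ≠ 0 := by rw [hL0]; exact (hL N (by omega) le_rfl).ne'
    have hθN : θ N = θ 1 - α 0 + 2 * Real.pi := by rw [hα0, hθ1]; linarith
    have hθ2 : θ 2 = θ 1 + α 1 := hθstep 1 le_rfl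
    have hcb : Real.cos (θ N) = Real.cos (θ 1 - α 0) := by
      rw [hθN, Real.cos_add_two_pi]
    have hsb : Real.sin (θ N) = Real.sin (θ 1 - α 0) := by
      rw [hθN, Real.sin_add_two_pi]
    rw [hU 1 le_rfl (by omega), hU N (by omega) le_rfl, hU 2 (by omega) (by omega), ← hL0]
    have hca : Real.cos (θ 2) = Real.cos (θ 1 + α 1) := by rw [hθ2]
    have hsa : Real.sin (θ 2) = Real.sin (θ 1 + α 1) := by rw [hθ2]
    exact key (α 1) (α 0) (θ 1) (L 2) (L 0) (L 1) (σ 1)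
      (hα 1 le_rfl (by omega)) hb (hL 2 (by omega) (by omega)).ne' hLb
      (hL 1 le_rfl (by omega)).ne' (hσ 1) (Real.cos (θ 2)) (Real.sin (θ 2))
      (Real.cos (θ N)) (Real.sin (θ N)) hca hsa hcb hsb
  · by_cases heN : n = N
    · rw [if_neg he1, if_pos heN]
      have hLa : L (n + 1) ≠ 0 := by
        have h : L (n + 1) = L 1 := by rw [heN, Nat.add_comm]; exact hLper 1
        rw [h]; exact (hL 1 le_rfl (by omega)).ne'
      have hθp : θ (n - 1) = θ n - α (n - 1) := by
        have h := hθstep (n - 1) (by omega)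
        rw [show n - 1 + 1 = n by omega] at h
        linarith
      have hθq : θ 1 = θ n + α n - 2 * Real.pi := by
        rw [hθ1, heN]; linarith
      have hca : Real.cos (θ 1) = Real.cos (θ n + α n) := by
        rw [hθq, Real.cos_sub_two_pi]
      have hsa : Real.sin (θ 1) = Real.sin (θ n + α n) := by
        rw [hθq, Real.sin_sub_two_pi]
      have hcb : Real.cos (θ (n - 1)) = Real.cos (θ n - α (n - 1)) := by rw [hθp]
      have hsb : Real.sin (θ (n - 1)) = Real.sin (θ n - α (n - 1)) := by rw [hθp]
      have hLn1 : L (n + 1) = L 1 := by rw [heN, Nat.add_comm]; exact hLper 1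
      rw [hU n h1 hn, hU (n - 1) (by omega) (by omega), hU 1 (by omega) (by omega), ← hLn1]
      exact key (α n) (α (n - 1)) (θ n) (L (n + 1)) (L (n - 1)) (L n) (σ n)
        (hα n h1 hn) (hα (n - 1) (by omega) (by omega)) hLa
        (hL (n - 1) (by omega) (by omega)).ne' (hL n h1 hn).ne' (hσ n)
        (Real.cos (θ 1)) (Real.sin (θ 1)) (Real.cos (θ (n - 1))) (Real.sin (θ (n - 1)))
        hca hsa hcb hsb
    · rw [if_neg he1, if_neg heN]
      have hθp : θ (n - 1) = θ n - α (n - 1) := by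
        have h := hθstep (n - 1) (by omega)
        rw [show n - 1 + 1 = n by omega] at h
        linarith
      have hθq : θ (n + 1) = θ n + α n := hθstep n h1
      rw [hU n h1 hn, hU (n - 1) (by omega) (by omega), hU (n + 1) (by omega) (by omega)]
      have hca : Real.cos (θ (n + 1)) = Real.cos (θ n + α n) := by rw [hθq]
      have hsa : Real.sin (θ (n + 1)) = Real.sin (θ n + α n) := by rw [hθq]
      have hcb : Real.cos (θ (n - 1)) = Real.cos (θ n - α (n - 1)) := by rw [hθp]
      have hsb : Real.sin (θ (n - 1)) = Real.sin (θ n - α (n - 1)) := by rw [hθp]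
      exact key (α n) (α (n - 1)) (θ n) (L (n + 1)) (L (n - 1)) (L n) (σ n)
        (hα n h1 hn) (hα (n - 1) (by omega) (by omega))
        (hL (n + 1) (by omega) (by omega)).ne' (hL (n - 1) (by omega) (by omega)).ne'
        (hL n h1 hn).ne' (hσ n)
        (Real.cos (θ (n + 1))) (Real.sin (θ (n + 1)))
        (Real.cos (θ (n - 1))) (Real.sin (θ (n - 1))) hca hsa hcb hsb
end

section
/- Let α₁, α₂, α₃ be real numbers with sin αⱼ ≠ 0 for j = 1,2,3 and α₁ + α₂ + α₃ = 2π, and let L₁, L₂, L₃ be positive reals (indices mod 3). Define σ_n = csc α_n / L_{n+1} + csc α_{n−1} / L_{n−1} − (cot α_n + cot α_{n−1}) / L_n for n = 1,2,3. Then σ₁ / sin α₂ = σ₂ / sin α₃ = σ₃ / sin α₁. -/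
/-- Law-of-sines ratios for the closure of the force triangle at the hub of a 3-spoke wheel:
for sector angles `α₁, α₂, α₃` (indices mod 3) with non-vanishing sines summing to `2π` and
positive spoke lengths `L₁, L₂, L₃`, the spoke stresses
`σ_n = csc α_n / L_{n+1} + csc α_{n-1} / L_{n-1} - (cot α_n + cot α_{n-1}) / L_n`
satisfy `σ₁ / sin α₂ = σ₂ / sin α₃ = σ₃ / sin α₁`. -/
theorem three_spoke_law_of_sines (α₁ α₂ α₃ : ℝ)
    (h₁ : Real.sin α₁ ≠ 0) (h₂ : Real.sin α₂ ≠ 0) (h₃ : Real.sin α₃ ≠ 0)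
    (hsum : α₁ + α₂ + α₃ = 2 * Real.pi)
    (L₁ L₂ L₃ : ℝ) (hL₁ : 0 < L₁) (hL₂ : 0 < L₂) (hL₃ : 0 < L₃)
    (σ₁ σ₂ σ₃ : ℝ)
    (hσ₁ : σ₁ = (1 / Real.sin α₁) / L₂ + (1 / Real.sin α₃) / L₃
      - (Real.cos α₁ / Real.sin α₁ + Real.cos α₃ / Real.sin α₃) / L₁)
    (hσ₂ : σ₂ = (1 / Real.sin α₂) / L₃ + (1 / Real.sin α₁) / L₁
      - (Real.cos α₂ / Real.sin α₂ + Real.cos α₁ / Real.sin α₁) / L₂)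
    (hσ₃ : σ₃ = (1 / Real.sin α₃) / L₁ + (1 / Real.sin α₂) / L₂
      - (Real.cos α₃ / Real.sin α₃ + Real.cos α₂ / Real.sin α₂) / L₃) :
    σ₁ / Real.sin α₂ = σ₂ / Real.sin α₃ ∧ σ₂ / Real.sin α₃ = σ₃ / Real.sin α₁ := by
  have hα : α₃ = 2 * Real.pi - (α₁ + α₂) := by linarith
  have hs : Real.sin α₃ = -(Real.sin α₁ * Real.cos α₂ + Real.cos α₁ * Real.sin α₂) := by
    rw [hα, Real.sin_sub, ← Real.sin_add]; simp
  have hc : Real.cos α₃ = Real.cos α₁ * Real.cos α₂ - Real.sin α₁ * Real.sin α₂ := by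
    rw [hα, Real.cos_sub, ← Real.cos_add]; simp
  have hne : Real.sin α₁ * Real.cos α₂ + Real.cos α₁ * Real.sin α₂ ≠ 0 := by
    intro h; apply h₃; rw [hs, h, neg_zero]
  have hne' : -(Real.sin α₁ * Real.cos α₂ + Real.cos α₁ * Real.sin α₂) ≠ 0 :=
    neg_ne_zero.mpr hne
  subst hσ₁ hσ₂ hσ₃
  constructor
  · rw [div_eq_div_iff h₂ h₃]
    field_simp
    rw [hs, hc]
    linear_combination (L₂ * L₃ * Real.sin α₂) * Real.sin_sq_add_cos_sq α₁
  · rw [div_eq_div_iff h₃ h₁]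
    field_simp
    rw [hs, hc]
    linear_combination (-(L₁ * L₂ * Real.sin α₁)) * Real.sin_sq_add_cos_sq α₂
end

section
/- Let a and b be real numbers with sin a ≠ 0, sin b ≠ 0, and sin(a+b) ≠ 0, and let L₋, L₀, L₊ be positive reals. Define σ = csc b / L₊ + csc a / L₋ − (cot b + cot a)/L₀ and Δσ = csc a / L₀ − csc(a+b)/L₊ − (cot a − cot(a+b))/L₋. Then σ · sin b + Δσ · sin(a+b) = 0. -/
/-- Key trigonometric identity in the inductive proof that the wheel stress is a self stress:
for real `a`, `b` with `sin a ≠ 0`, `sin b ≠ 0`, `sin (a+b) ≠ 0` and positive reals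
`L₋, L₀, L₊`, setting `σ = csc b / L₊ + csc a / L₋ - (cot b + cot a)/L₀` and
`Δσ = csc a / L₀ - csc (a+b) / L₊ - (cot a - cot (a+b)) / L₋`, one has
`σ * sin b + Δσ * sin (a+b) = 0`. -/
theorem wheel_stress_induction_identity (a b : ℝ)
    (ha : Real.sin a ≠ 0) (hb : Real.sin b ≠ 0) (hab : Real.sin (a + b) ≠ 0)
    (Lm L0 Lp : ℝ) (hLm : 0 < Lm) (hL0 : 0 < L0) (hLp : 0 < Lp)
    (σ Δσ : ℝ)
    (hσ : σ = (1 / Real.sin b) / Lp + (1 / Real.sin a) / Lm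
      - (Real.cos b / Real.sin b + Real.cos a / Real.sin a) / L0)
    (hΔσ : Δσ = (1 / Real.sin a) / L0 - (1 / Real.sin (a + b)) / Lp
      - (Real.cos a / Real.sin a - Real.cos (a + b) / Real.sin (a + b)) / Lm) :
    σ * Real.sin b + Δσ * Real.sin (a + b) = 0 := by
  subst hσ hΔσ
  rw [Real.sin_add, Real.cos_add] at *
  have hab' : Real.sin a * Real.cos b + Real.sin b * Real.cos a ≠ 0 := by rwa [mul_comm (Real.sin b)]
  field_simp
  linear_combination (-(Lp * L0 * Real.sin b)) * Real.sin_sq_add_cos_sq a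
end

section
/- Let α ∈ (0, π) and define, for (x, y) in a neighborhood of (π/2, π/2), β(x, y) = arccos( (cos α − cos x · cos y) / (sin x · sin y) ). Then β(π/2, π/2) = α, and as (s, t) → (0, 0) in ℝ², β(π/2 + s, π/2 + t) = α + (2st − (s² + t²) cos α) / (2 sin α) + o(s² + t²). -/
open Real Asymptotics Filter

namespace SphAux

lemma abs_cos_sub (x : ℝ) (hx : |x| ≤ 1) : |Real.cos x - (1 - x ^ 2 / 2)| ≤ x ^ 4 := by
  have h := Real.cos_bound hx
  have h4 : |x| ^ 4 = x ^ 4 := by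
    rw [← abs_pow, abs_of_nonneg (by positivity)]
  nlinarith [pow_nonneg (abs_nonneg x) 4]

lemma abs_sin_sub (x : ℝ) (hx : |x| ≤ 1) : |Real.sin x - x| ≤ |x| ^ 3 := by
  have h := Real.sin_bound hx
  have htri := abs_sub_le (Real.sin x) (x - x ^ 3 / 6) x
  have h6 : |x - x ^ 3 / 6 - x| = |x| ^ 3 / 6 := by
    rw [show x - x ^ 3 / 6 - x = -(x ^ 3 / 6) by ring, abs_neg, abs_div, abs_pow]
    norm_num
  have h4 : |x| ^ 4 ≤ |x| ^ 3 := pow_le_pow_of_le_one (abs_nonneg x) hx (by norm_num)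
  nlinarith [pow_nonneg (abs_nonneg x) 3, pow_le_pow_of_le_one (abs_nonneg x) hx (by norm_num : 3 ≤ 5)]

lemma abs_sin_le' (x : ℝ) (hx : |x| ≤ 1) : |Real.sin x| ≤ 2 * |x| := by
  have h := abs_sin_sub x hx
  have htri := abs_add_le (Real.sin x - x) x
  have h3 : |x| ^ 3 ≤ |x| :=
    (pow_le_pow_of_le_one (abs_nonneg x) hx (by norm_num)).trans_eq (pow_one _)
  simp only [sub_add_cancel] at htri
  linarith

lemma small_nhds : ∀ᶠ p : ℝ × ℝ in nhds 0, |p.1| ≤ 1 ∧ |p.2| ≤ 1 := by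
  have h1 : ∀ᶠ x : ℝ in nhds 0, |x| ≤ 1 := by
    filter_upwards [Metric.ball_mem_nhds (0 : ℝ) one_pos] with x hx
    have := mem_ball_zero_iff.mp hx
    simpa using this.le
  exact ((continuous_fst.tendsto (0 : ℝ × ℝ)).eventually h1).and
    ((continuous_snd.tendsto (0 : ℝ × ℝ)).eventually h1)

lemma tendsto_nsq : Tendsto (fun p : ℝ × ℝ => p.1 ^ 2 + p.2 ^ 2) (nhds 0) (nhds 0) := by
  have : Continuous fun p : ℝ × ℝ => p.1 ^ 2 + p.2 ^ 2 := by fun_prop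
  simpa using this.tendsto 0

lemma o_of_sq {f : ℝ × ℝ → ℝ} {C : ℝ}
    (h : ∀ᶠ p in nhds (0 : ℝ × ℝ), |f p| ≤ C * (p.1 ^ 2 + p.2 ^ 2) ^ 2) :
    f =o[nhds (0 : ℝ × ℝ)] fun p => p.1 ^ 2 + p.2 ^ 2 := by
  have h1 : f =O[nhds (0 : ℝ × ℝ)] fun p => (p.1 ^ 2 + p.2 ^ 2) ^ 2 := by
    refine IsBigO.of_bound C (h.mono fun p hp => ?_)
    simpa [Real.norm_eq_abs, abs_of_nonneg (by positivity : (0:ℝ) ≤ (p.1 ^ 2 + p.2 ^ 2) ^ 2)]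
      using hp
  refine h1.trans_isLittleO ?_
  have h2 : (fun p : ℝ × ℝ => p.1 ^ 2 + p.2 ^ 2) =o[nhds (0 : ℝ × ℝ)] (fun _ => (1 : ℝ)) :=
    (isLittleO_one_iff ℝ).mpr tendsto_nsq
  have h3 := h2.mul_isBigO (isBigO_refl (fun p : ℝ × ℝ => p.1 ^ 2 + p.2 ^ 2) (nhds 0))
  refine h3.congr (fun p => by ring) (fun p => by ring)

lemma P1 : (fun p : ℝ × ℝ => 1 - Real.cos p.1 * Real.cos p.2 - (p.1 ^ 2 + p.2 ^ 2) / 2)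
    =o[nhds (0 : ℝ × ℝ)] fun p => p.1 ^ 2 + p.2 ^ 2 := by
  refine o_of_sq (C := 3) ?_
  filter_upwards [small_nhds] with p hp
  obtain ⟨hs, ht⟩ := hp
  obtain ⟨s, t⟩ := p
  simp only at hs ht ⊢
  have hcs := abs_cos_sub s hs
  have hct := abs_cos_sub t ht
  have hs2 : s ^ 2 ≤ 1 := by nlinarith [sq_abs s, abs_nonneg s]
  have ht2 : t ^ 2 ≤ 1 := by nlinarith [sq_abs t, abs_nonneg t]
  have hct2 : |Real.cos t - 1| ≤ 2 * t ^ 2 := by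
    have htri := abs_sub_le (Real.cos t) (1 - t ^ 2 / 2) 1
    have h2 : |1 - t ^ 2 / 2 - 1| = t ^ 2 / 2 := by
      rw [show 1 - t ^ 2 / 2 - 1 = -(t ^ 2 / 2) by ring, abs_neg,
        abs_of_nonneg (by positivity)]
    nlinarith [sq_nonneg t, sq_nonneg (t ^ 2), mul_le_one₀ ht2 (sq_nonneg t) ht2]
  have hcos1 : |Real.cos t| ≤ 1 := Real.abs_cos_le_one t
  have key : 1 - Real.cos s * Real.cos t - (s ^ 2 + t ^ 2) / 2 =
      (-(Real.cos s - (1 - s ^ 2 / 2)) * Real.cos t) + (-(Real.cos t - (1 - t ^ 2 / 2)))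
        + (s ^ 2 / 2) * (Real.cos t - 1) := by ring
  rw [key]
  refine (abs_add_three _ _ _).trans ?_
  have e1 : |(-(Real.cos s - (1 - s ^ 2 / 2)) * Real.cos t)| ≤ s ^ 4 := by
    rw [abs_mul, abs_neg]
    calc |Real.cos s - (1 - s ^ 2 / 2)| * |Real.cos t| ≤ s ^ 4 * 1 :=
      mul_le_mul hcs hcos1 (abs_nonneg _) (by positivity)
    _ = s ^ 4 := by ring
  have e2 : |(-(Real.cos t - (1 - t ^ 2 / 2)))| ≤ t ^ 4 := by rw [abs_neg]; exact hct
  have e3 : |(s ^ 2 / 2) * (Real.cos t - 1)| ≤ s ^ 2 / 2 * (2 * t ^ 2) := by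
    rw [abs_mul, abs_of_nonneg (by positivity : (0:ℝ) ≤ s ^ 2 / 2)]
    exact mul_le_mul_of_nonneg_left hct2 (by positivity)
  nlinarith [sq_nonneg s, sq_nonneg t, sq_nonneg (s * t), sq_nonneg (s ^ 2 - t ^ 2)]

lemma P2 : (fun p : ℝ × ℝ => Real.sin p.1 * Real.sin p.2 - p.1 * p.2)
    =o[nhds (0 : ℝ × ℝ)] fun p => p.1 ^ 2 + p.2 ^ 2 := by
  refine o_of_sq (C := 2) ?_
  filter_upwards [small_nhds] with p hp
  obtain ⟨hs, ht⟩ := hp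
  set s := p.1; set t := p.2
  have hss := abs_sin_sub s hs
  have hts := abs_sin_sub t ht
  have hsl := abs_sin_le' t ht
  have key : Real.sin s * Real.sin t - s * t =
      (Real.sin s - s) * Real.sin t + s * (Real.sin t - t) := by ring
  rw [key]
  have habs : |(Real.sin s - s) * Real.sin t + s * (Real.sin t - t)| ≤
      |Real.sin s - s| * |Real.sin t| + |s| * |Real.sin t - t| := by
    calc _ ≤ |(Real.sin s - s) * Real.sin t| + |s * (Real.sin t - t)| := abs_add_le _ _
    _ = _ := by rw [abs_mul, abs_mul]
  refine habs.trans ?_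
  have h1 : |Real.sin s - s| * |Real.sin t| ≤ |s| ^ 3 * (2 * |t|) :=
    mul_le_mul hss hsl (abs_nonneg _) (by positivity)
  have h2 : |s| * |Real.sin t - t| ≤ |s| * |t| ^ 3 := by
    exact mul_le_mul_of_nonneg_left hts (abs_nonneg _)
  have ha := abs_nonneg s
  have hb := abs_nonneg t
  have has : |s| ^ 2 = s ^ 2 := sq_abs s
  have hat : |t| ^ 2 = t ^ 2 := sq_abs t
  nlinarith [sq_nonneg (|s| - |t|), sq_nonneg (|s| * |t|), mul_nonneg ha hb,
    mul_nonneg (mul_nonneg ha ha) hb, mul_nonneg (mul_nonneg hb hb) ha,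
    sq_nonneg (|s| * |s| - |s| * |t|), sq_nonneg (|t| * |t| - |s| * |t|)]

end SphAux

open Real Asymptotics in
/-- Quadratic expansion of the apex angle of a spherical triangle near the flat state:
for `α ∈ (0, π)` and `β (x, y) = arccos ((cos α - cos x cos y) / (sin x sin y))`, one has
`β (π/2, π/2) = α`, and as `(s, t) → (0, 0)`,
`β (π/2 + s, π/2 + t) = α + (2 s t - (s² + t²) cos α) / (2 sin α) + o(s² + t²)`. -/
theorem spherical_angle_quadratic_expansion (α : ℝ) (hα : α ∈ Set.Ioo 0 Real.pi) :
    Real.arccos ((Real.cos α - Real.cos (Real.pi / 2) * Real.cos (Real.pi / 2))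
        / (Real.sin (Real.pi / 2) * Real.sin (Real.pi / 2))) = α ∧
    (fun p : ℝ × ℝ =>
        Real.arccos ((Real.cos α
            - Real.cos (Real.pi / 2 + p.1) * Real.cos (Real.pi / 2 + p.2))
          / (Real.sin (Real.pi / 2 + p.1) * Real.sin (Real.pi / 2 + p.2)))
        - α - (2 * p.1 * p.2 - (p.1 ^ 2 + p.2 ^ 2) * Real.cos α) / (2 * Real.sin α))
      =o[nhds (0 : ℝ × ℝ)] (fun p : ℝ × ℝ => p.1 ^ 2 + p.2 ^ 2) := by
  obtain ⟨hα0, hαπ⟩ := hα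
  have hsa : 0 < Real.sin α := Real.sin_pos_of_pos_of_lt_pi hα0 hαπ
  constructor
  · simp [Real.cos_pi_div_two, Real.sin_pi_div_two, Real.arccos_cos hα0.le hαπ.le]
  · -- notation
    set c : ℝ := Real.cos α with hc
    set sa : ℝ := Real.sin α with hsadef
    -- basic functions
    set D : ℝ × ℝ → ℝ := fun p => Real.cos p.1 * Real.cos p.2 with hD
    set u : ℝ × ℝ → ℝ := fun p => (c - Real.sin p.1 * Real.sin p.2) / D p with hu
    set hfun : ℝ × ℝ → ℝ := fun p => u p - c with hhfun
    set N : ℝ × ℝ → ℝ := fun p => c - Real.sin p.1 * Real.sin p.2 - c * D p with hN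
    have hDpos : ∀ᶠ p : ℝ × ℝ in nhds 0, (1:ℝ)/2 < D p := by
      have hDc : Continuous D := by fun_prop
      have : Tendsto D (nhds 0) (nhds 1) := by
        have := hDc.tendsto 0
        simpa [hD] using this
      exact this.eventually (eventually_gt_nhds (by norm_num))
    -- PA1 : N p + s t - c (s²+t²)/2 = o
    have PA1 : (fun p : ℝ × ℝ => N p + p.1 * p.2 - c * (p.1 ^ 2 + p.2 ^ 2) / 2)
        =o[nhds (0 : ℝ × ℝ)] fun p => p.1 ^ 2 + p.2 ^ 2 := by
      have h1 := (SphAux.P1.const_mul_left c).sub SphAux.P2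
      refine h1.congr_left fun p => ?_
      simp only [hN, hD]; ring
    -- st = O(nsq)
    have stO : (fun p : ℝ × ℝ => p.1 * p.2) =O[nhds (0 : ℝ × ℝ)]
        fun p => p.1 ^ 2 + p.2 ^ 2 := by
      refine IsBigO.of_bound 1 (Filter.Eventually.of_forall fun p => ?_)
      simp only [Real.norm_eq_abs]
      rw [abs_of_nonneg (by positivity : (0:ℝ) ≤ p.1 ^ 2 + p.2 ^ 2)]
      rw [abs_mul]
      nlinarith [sq_nonneg (|p.1| - |p.2|), sq_abs p.1, sq_abs p.2, abs_nonneg p.1,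
        abs_nonneg p.2, abs_mul p.1 p.2]
    have sqO : (fun p : ℝ × ℝ => c * (p.1 ^ 2 + p.2 ^ 2) / 2) =O[nhds (0 : ℝ × ℝ)]
        fun p => p.1 ^ 2 + p.2 ^ 2 := by
      have := (isBigO_refl (fun p : ℝ × ℝ => p.1 ^ 2 + p.2 ^ 2) (nhds 0)).const_mul_left (c / 2)
      refine this.congr_left fun p => by ring
    have NO : N =O[nhds (0 : ℝ × ℝ)] fun p => p.1 ^ 2 + p.2 ^ 2 := by
      have := (PA1.isBigO.sub stO).add sqO
      refine this.congr_left fun p => by ring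
    -- PA2 : N (1-D)/D = o
    have restO : (fun p : ℝ × ℝ => (1 - D p) / D p) =o[nhds (0 : ℝ × ℝ)]
        (fun _ => (1 : ℝ)) := by
      rw [isLittleO_one_iff ℝ]
      have hDc : Continuous D := by fun_prop
      have hDt : Tendsto D (nhds 0) (nhds 1) := by simpa [hD] using hDc.tendsto 0
      have := ((tendsto_const_nhds (x := (1:ℝ))).sub hDt).div hDt one_ne_zero
      rw [show ((1:ℝ) - 1) / 1 = 0 by norm_num] at this
      exact this
    have PA2 : (fun p : ℝ × ℝ => N p * ((1 - D p) / D p)) =o[nhds (0 : ℝ × ℝ)]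
        fun p => p.1 ^ 2 + p.2 ^ 2 := by
      have := NO.mul_isLittleO restO
      refine this.congr_right fun p => by ring
    -- A : h p + s t - c (s²+t²)/2 = o
    have hA : (fun p : ℝ × ℝ => hfun p + p.1 * p.2 - c * (p.1 ^ 2 + p.2 ^ 2) / 2)
        =o[nhds (0 : ℝ × ℝ)] fun p => p.1 ^ 2 + p.2 ^ 2 := by
      refine (PA1.add PA2).congr' ?_ EventuallyEq.rfl
      filter_upwards [hDpos] with p hp
      have hne : D p ≠ 0 := by linarith
      simp only [hhfun, hu, hN]
      field_simp
      ring
    -- h = O(nsq), h → 0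
    have hO : hfun =O[nhds (0 : ℝ × ℝ)] fun p => p.1 ^ 2 + p.2 ^ 2 := by
      have := (hA.isBigO.sub stO).add sqO
      refine this.congr_left fun p => by ring
    have htend : Tendsto hfun (nhds 0) (nhds 0) := hO.trans_tendsto SphAux.tendsto_nsq
    have hutend : Tendsto u (nhds 0) (nhds c) := by
      have : Tendsto (fun p => hfun p + c) (nhds (0 : ℝ × ℝ)) (nhds (0 + c)) :=
        htend.add tendsto_const_nhds
      simpa [hhfun] using this
    -- derivative of arccos at c
    have hclt : c < 1 := by
      have := Real.cos_lt_cos_of_nonneg_of_le_pi le_rfl hαπ.le hα0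
      simpa [hc] using this
    have hcgt : -1 < c := by
      have := Real.cos_lt_cos_of_nonneg_of_le_pi hα0.le le_rfl hαπ
      simpa [hc] using this
    have hsq : Real.sqrt (1 - c ^ 2) = sa := by
      rw [show 1 - c ^ 2 = sa ^ 2 by nlinarith [Real.sin_sq_add_cos_sq α]]
      exact Real.sqrt_sq hsa.le
    have hda := Real.hasDerivAt_arccos (x := c) (by linarith) (by linarith)
    rw [hsq] at hda
    have hlo := (hasDerivAt_iff_isLittleO.mp hda)
    have hacc : Real.arccos c = α := Real.arccos_cos hα0.le hαπ.le
    -- compose with u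
    have B0 := hlo.comp_tendsto hutend
    have B : (fun p : ℝ × ℝ => Real.arccos (u p) - α + hfun p / sa)
        =o[nhds (0 : ℝ × ℝ)] fun p => p.1 ^ 2 + p.2 ^ 2 := by
      refine (IsLittleO.trans_isBigO ?_ hO)
      refine B0.congr_left fun p => ?_
      simp only [Function.comp, hacc, hhfun, smul_eq_mul]
      field_simp
      ring
    -- combine
    have final := B.sub (hA.const_mul_left (1 / sa))
    refine final.congr' ?_ EventuallyEq.rfl
    filter_upwards [hDpos] with p hp
    have hne : D p ≠ 0 := by linarith
    have harg : (Real.cos α - Real.cos (Real.pi / 2 + p.1) * Real.cos (Real.pi / 2 + p.2))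
        / (Real.sin (Real.pi / 2 + p.1) * Real.sin (Real.pi / 2 + p.2)) = u p := by
      simp only [Real.cos_add, Real.sin_add, Real.cos_pi_div_two, Real.sin_pi_div_two, hu, hD,
        hc]
      ring_nf
    simp only [hhfun]
    rw [harg]
    field_simp
    ring
end
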